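/- arXiv:2112.03108 — 2 statements merged into one kernel-verified Lean document; each statement's English description precedes it below -/
import Mathlib

section
/- Let y and ŷ¹,…,ŷᴹ be nonzero vectors in ℝᴺ, and let a₁,…,a_M be nonnegative real weights with ∑_{m=1}^{M} a_m = 1. Define the ℓ₂-normalized ensemble ȳ_(a) = ∑_{m=1}^{M} a_m · ŷᵐ/‖ŷᵐ‖₂, and assume ȳ_(a) ≠ 0. If the weighted average of the base skills is nonnegative, i.e. ∑_{m=1}^{M} a_m · sim(ŷᵐ, y) ≥ 0, then ∑_{m=1}^{M} a_m · sim(ŷᵐ, y) ≤ sim(ȳ_(a), y), where sim(u, v) = ⟨u, v⟩ / (‖u‖₂ ‖v‖₂) denotes cosine similarity. -/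
open Finset

noncomputable def sim {N : ℕ} (u v : EuclideanSpace ℝ (Fin N)) : ℝ :=
  (inner ℝ u v : ℝ) / (‖u‖ * ‖v‖)

theorem l2_ensemble_skill_ge_weighted_avg
    {N M : ℕ} (y : EuclideanSpace ℝ (Fin N)) (yhat : Fin M → EuclideanSpace ℝ (Fin N))
    (a : Fin M → ℝ)
    (hy : y ≠ 0) (hyhat : ∀ m, yhat m ≠ 0)
    (ha : ∀ m, 0 ≤ a m) (hsum : ∑ m, a m = 1)
    (hens : ∑ m, a m • (‖yhat m‖⁻¹ • yhat m) ≠ 0)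
    (hpos : 0 ≤ ∑ m, a m * sim (yhat m) y) :
    ∑ m, a m * sim (yhat m) y ≤ sim (∑ m, a m • (‖yhat m‖⁻¹ • yhat m)) y := by
  set v : EuclideanSpace ℝ (Fin N) := ∑ m, a m • (‖yhat m‖⁻¹ • yhat m) with hv
  set S : ℝ := ∑ m, a m * sim (yhat m) y with hS
  have hyn : (0:ℝ) < ‖y‖ := norm_pos_iff.mpr hy
  have hvn : (0:ℝ) < ‖v‖ := norm_pos_iff.mpr hens
  have hinner : (inner ℝ v y : ℝ) = ‖y‖ * S := by
    rw [hv, sum_inner, hS, Finset.mul_sum]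
    refine Finset.sum_congr rfl fun m _ => ?_
    have hm : (0:ℝ) < ‖yhat m‖ := norm_pos_iff.mpr (hyhat m)
    rw [real_inner_smul_left, real_inner_smul_left, sim]
    field_simp
  have hnorm1 : ‖v‖ ≤ 1 := by
    calc ‖v‖ ≤ ∑ m, ‖a m • (‖yhat m‖⁻¹ • yhat m)‖ := norm_sum_le _ _
    _ = ∑ m, a m := by
        refine Finset.sum_congr rfl fun m _ => ?_
        have hm : (0:ℝ) < ‖yhat m‖ := norm_pos_iff.mpr (hyhat m)
        rw [norm_smul, norm_smul, Real.norm_of_nonneg (ha m), norm_inv, norm_norm,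
          inv_mul_cancel₀ hm.ne', mul_one]
    _ = 1 := hsum
  have : sim v y = S / ‖v‖ := by
    rw [sim, hinner]
    field_simp
  rw [this]
  calc S = S / 1 := by ring
  _ ≤ S / ‖v‖ := by
      exact div_le_div_of_nonneg_left hpos hvn hnorm1
end

section
/- Let y and ŷ¹,…,ŷᴹ be nonzero vectors in ℝᴺ, let a₁,…,a_M be strictly positive real weights with ∑_{m=1}^{M} a_m = 1, and let ȳ_(a) = ∑_{m=1}^{M} a_m · ŷᵐ/‖ŷᵐ‖₂ be nonzero. Assume the base forecasts are distinct, i.e. ŷⁱ/‖ŷⁱ‖₂ ≠ ŷʲ/‖ŷʲ‖₂ for some i ≠ j, and that the weighted average of the base skills is strictly positive: ∑_{m=1}^{M} a_m · sim(ŷᵐ, y) > 0. Then the inequality is strict: ∑_{m=1}^{M} a_m · sim(ŷᵐ, y) < sim(ȳ_(a), y), where sim(u, v) = ⟨u, v⟩ / (‖u‖₂ ‖v‖₂) denotes cosine similarity. -/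
open Finset

theorem l2_ensemble_skill_strict
    {N M : ℕ} (y : EuclideanSpace ℝ (Fin N)) (yhat : Fin M → EuclideanSpace ℝ (Fin N))
    (a : Fin M → ℝ)
    (hy : y ≠ 0) (hyhat : ∀ m, yhat m ≠ 0)
    (ha : ∀ m, 0 < a m) (hsum : ∑ m, a m = 1)
    (hens : ∑ m, a m • (‖yhat m‖⁻¹ • yhat m) ≠ 0)
    (i j : Fin M) (hij : i ≠ j)
    (hdist : ‖yhat i‖⁻¹ • yhat i ≠ ‖yhat j‖⁻¹ • yhat j)
    (hpos : 0 < ∑ m, a m * sim (yhat m) y) :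
    ∑ m, a m * sim (yhat m) y < sim (∑ m, a m • (‖yhat m‖⁻¹ • yhat m)) y := by
  set u : Fin M → EuclideanSpace ℝ (Fin N) := fun m => ‖yhat m‖⁻¹ • yhat m with hu
  have hnormu : ∀ m, ‖u m‖ = 1 := by
    intro m
    have h0 : ‖yhat m‖ ≠ 0 := norm_ne_zero_iff.mpr (hyhat m)
    simp [hu, norm_smul, abs_of_nonneg (inv_nonneg.mpr (norm_nonneg _)),
      inv_mul_cancel₀ h0]
  have hyn : (0:ℝ) < ‖y‖ := norm_pos_iff.mpr hy
  set w : EuclideanSpace ℝ (Fin N) := ∑ m, a m • u m with hw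
  have hwn : (0:ℝ) < ‖w‖ := norm_pos_iff.mpr hens
  -- the key strict norm bound
  have hwlt : ‖w‖ < 1 := by
    have hij' : j ∈ univ.erase i := by simp [Ne.symm hij]
    have hsplit : w = (a i • u i + a j • u j) + ∑ m ∈ (univ.erase i).erase j, a m • u m := by
      rw [hw, ← Finset.add_sum_erase _ _ (Finset.mem_univ i),
        ← Finset.add_sum_erase _ _ hij', ← add_assoc]
    have hpair : ‖a i • u i + a j • u j‖ < a i + a j := by
      have hab : (0:ℝ) < a i + a j := add_pos (ha i) (ha j)
      have h1 : ‖(a i / (a i + a j)) • u i + (a j / (a i + a j)) • u j‖ < 1 :=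
        norm_combo_lt_of_ne (le_of_eq (hnormu i)) (le_of_eq (hnormu j)) hdist
          (div_pos (ha i) hab) (div_pos (ha j) hab) (by field_simp)
      have e1 : (a i + a j) * (a i / (a i + a j)) = a i := by field_simp
      have e2 : (a i + a j) * (a j / (a i + a j)) = a j := by field_simp
      have h2 : a i • u i + a j • u j
          = (a i + a j) • ((a i / (a i + a j)) • u i + (a j / (a i + a j)) • u j) := by
        clear_value u
        rw [smul_add, smul_smul, smul_smul, e1, e2]
      rw [h2, norm_smul, Real.norm_eq_abs, abs_of_pos hab]
      calc (a i + a j) * ‖(a i / (a i + a j)) • u i + (a j / (a i + a j)) • u j‖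
          < (a i + a j) * 1 := by exact (mul_lt_mul_iff_right₀ hab).mpr h1
        _ = a i + a j := mul_one _
    have hrest : ‖∑ m ∈ (univ.erase i).erase j, a m • u m‖
        ≤ ∑ m ∈ (univ.erase i).erase j, a m := by
      refine le_trans (norm_sum_le _ _) (le_of_eq ?_)
      refine Finset.sum_congr rfl fun m _ => ?_
      rw [norm_smul, hnormu m, mul_one, Real.norm_eq_abs, abs_of_pos (ha m)]
    have hsum' : (a i + a j) + ∑ m ∈ (univ.erase i).erase j, a m = 1 := by
      rw [add_assoc, Finset.add_sum_erase _ _ hij', Finset.add_sum_erase _ _ (Finset.mem_univ i),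
        hsum]
    calc ‖w‖ ≤ ‖a i • u i + a j • u j‖ + ∑ m ∈ (univ.erase i).erase j, a m := by
          rw [hsplit]; exact le_trans (norm_add_le _ _) (by linarith [hrest])
      _ < (a i + a j) + ∑ m ∈ (univ.erase i).erase j, a m := by linarith
      _ = 1 := hsum'
  -- rewrite both sides in terms of c = ⟪w, y⟫
  have hinner : ∀ m, (inner ℝ (u m) y : ℝ) = ‖yhat m‖⁻¹ * (inner ℝ (yhat m) y : ℝ) := fun m =>
    real_inner_smul_left _ _ _
  have hlhs : ∑ m, a m * sim (yhat m) y = (inner ℝ w y : ℝ) / ‖y‖ := by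
    rw [hw, sum_inner, Finset.sum_div]
    refine Finset.sum_congr rfl fun m _ => ?_
    rw [real_inner_smul_left, hinner m, sim]
    have h0 : ‖yhat m‖ ≠ 0 := norm_ne_zero_iff.mpr (hyhat m)
    field_simp
  have hc : (0:ℝ) < (inner ℝ w y : ℝ) := by
    have := hpos
    rw [hlhs] at this
    exact (div_pos_iff.mp this).resolve_right (fun h => absurd h.2 (by linarith)) |>.1
  rw [hlhs, hw] at *
  show (inner ℝ w y : ℝ) / ‖y‖ < sim w y
  rw [sim]
  have : ‖w‖ * ‖y‖ < ‖y‖ := by nlinarith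
  exact div_lt_div_of_pos_left hc (by positivity) this
end
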